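/- Let d be an odd positive integer, ω = exp(−2πi/d), X, Z the shift and clock matrices on ℂ^d, and 2⁻¹ = (d+1)/2 the inverse of 2 mod d. Let ρ ∈ M_d(ℂ) be Hermitian with Tr(ρ) = 1, φ_ρ(j,l) = Tr(ρ · ω^{2⁻¹ jl} X^j Z^l), and discrete Wigner function μ_ρ(q,p) = (1/d) Σ_{j,l∈ℤ_d} ω^{−(jq+lp)} φ_ρ(j,l) for (q,p) ∈ ℤ_d × ℤ_d. Then ρ is a density matrix (positive semidefinite with unit trace) satisfying μ_ρ(q,p) ≥ 0 for all (q,p) if and only if both of the following d²×d² matrices indexed by ℤ_d × ℤ_d are positive semidefinite: M^Q with entries M^Q_{(j,l),(j',l')} = φ_ρ(j'−j, l'−l) ω^{2⁻¹(j l' − j' l)}, and M^C with entries M^C_{(j,l),(j',l')} = φ_ρ(j'−j, l'−l). -/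

import Mathlib

open Finset Matrix ComplexConjugate
open scoped ComplexOrder

/-- `ω = exp(−2πi/d)`, a primitive `d`-th root of unity for `d > 0`. -/
noncomputable def omega (d : ℕ) : ℂ := Complex.exp (-(2 * Real.pi * Complex.I) / d)

/-- The shift matrix `X` on `ℂ^d`: `X e_k = e_{k+1}` (indices mod `d`). -/
def shift (d : ℕ) : Matrix (ZMod d) (ZMod d) ℂ :=
  Matrix.of fun m k => if m = k + 1 then 1 else 0

/-- The clock matrix `Z` on `ℂ^d`: `Z e_k = ω^k e_k`. -/
noncomputable def clock (d : ℕ) : Matrix (ZMod d) (ZMod d) ℂ :=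
  Matrix.diagonal fun k => omega d ^ k.val

namespace QB

variable (d : ℕ) [NeZero d]

lemma omega_prim : IsPrimitiveRoot (omega d) d := by
  have h := Complex.isPrimitiveRoot_exp d (NeZero.ne d)
  have : omega d = (Complex.exp (2 * Real.pi * Complex.I / d))⁻¹ := by
    rw [← Complex.exp_neg]; unfold omega; ring_nf
  rw [this]; exact h.inv

noncomputable def ch : AddChar (ZMod d) ℂ := AddChar.zmodChar d (omega_prim d).pow_eq_one

lemma ch_apply (z : ZMod d) : ch d z = omega d ^ z.val := AddChar.zmodChar_apply _ _

lemma ch_natCast (n : ℕ) : ch d (n : ZMod d) = omega d ^ n := AddChar.zmodChar_apply' _ n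

lemma ch_prim : (ch d).IsPrimitive :=
  AddChar.zmodChar_primitive_of_primitive_root d (omega_prim d)

lemma sum_ch (a : ZMod d) : ∑ k : ZMod d, ch d (a * k) = if a = 0 then (d : ℂ) else 0 := by
  have h := AddChar.sum_mulShift (ψ := ch d) a (ch_prim d)
  simp_rw [mul_comm _ a] at h
  rw [h, ZMod.card]
  split_ifs <;> simp

lemma ch_conj (z : ZMod d) : conj (ch d z) = ch d (-z) := by
  have h1 : ch d z * ch d (-z) = 1 := by
    rw [← AddChar.map_add_eq_mul, add_neg_cancel, AddChar.map_zero_eq_one]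
  have habs : ‖omega d‖ = 1 := by
    unfold omega
    rw [Complex.norm_exp]
    norm_num [Complex.div_re]
  have h2 : ch d z * conj (ch d z) = 1 := by
    rw [ch_apply, Complex.mul_conj, ← Complex.sq_norm, norm_pow, habs]
    norm_num
  have hne : ch d z ≠ 0 := by
    intro h; rw [h, zero_mul] at h1; exact one_ne_zero h1.symm
  exact mul_left_cancel₀ hne (h2.trans h1.symm)

def cc : ZMod d := ((d + 1) / 2 : ℕ)

lemma two_cc (hd : Odd d) : (2 : ZMod d) * cc d = 1 := by
  have h2 : 2 ∣ d + 1 := by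
    obtain ⟨k, hk⟩ := hd; omega
  have : 2 * ((d + 1) / 2) = d + 1 := Nat.mul_div_cancel' h2
  have : ((2 * ((d + 1) / 2) : ℕ) : ZMod d) = ((d + 1 : ℕ) : ZMod d) := by rw [this]
  push_cast at this
  rw [ZMod.natCast_self] at this
  simpa [cc] using this

noncomputable def Dm (p : ZMod d × ZMod d) : Matrix (ZMod d) (ZMod d) ℂ :=
  Matrix.of fun m k => if m = k + p.1 then ch d (cc d * p.1 * p.2 + p.2 * k) else 0

lemma shift_pow (n : ℕ) :
    shift d ^ n = Matrix.of fun m k => if m = k + (n : ZMod d) then 1 else 0 := by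
  induction n with
  | zero => ext m k; simp [Matrix.one_apply, eq_comm]
  | succ n ih =>
    rw [pow_succ, ih]
    ext m k
    rw [Matrix.mul_apply]
    simp only [Matrix.of_apply, shift, ite_mul, one_mul, zero_mul, mul_ite, mul_one, mul_zero]
    rw [Finset.sum_ite_eq' Finset.univ (k + 1) (fun x => if m = x + (n : ZMod d) then (1:ℂ) else 0)]
    simp only [Finset.mem_univ, if_true]
    have : k + 1 + (n : ZMod d) = k + ((n : ℕ) + 1 : ℕ) := by push_cast; ring
    rw [this]

lemma clock_pow (n : ℕ) :
    clock d ^ n = Matrix.diagonal fun k => ch d ((n : ZMod d) * k) := by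
  rw [clock, Matrix.diagonal_pow]
  have : ((fun k : ZMod d => omega d ^ k.val) ^ n) = fun k : ZMod d => ch d ((n : ZMod d) * k) := by
    funext k
    rw [Pi.pow_apply, ← ch_apply, ← AddChar.map_nsmul_eq_pow, nsmul_eq_mul]
  rw [this]

lemma Dm_eq (p : ZMod d × ZMod d) :
    Dm d p = omega d ^ (cc d * p.1 * p.2).val •
      (shift d ^ (p.1).val * clock d ^ (p.2).val) := by
  rw [shift_pow, clock_pow]
  ext m k
  rw [Matrix.smul_apply, Matrix.mul_diagonal]
  simp only [Matrix.of_apply, Dm, ZMod.natCast_val, ZMod.cast_id]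
  rw [← ch_apply]
  split_ifs with h
  · rw [smul_eq_mul, one_mul, ← AddChar.map_add_eq_mul]
  · simp

lemma Dm_mul (hd : Odd d) (p q : ZMod d × ZMod d) :
    Dm d p * Dm d q = ch d (cc d * (p.2 * q.1 - p.1 * q.2)) • Dm d (p + q) := by
  have h2 := two_cc d hd
  ext m k
  rw [Matrix.mul_apply, Matrix.smul_apply]
  simp only [Matrix.of_apply, Dm, ite_mul, zero_mul, mul_ite, mul_zero, smul_eq_mul,
    Prod.fst_add, Prod.snd_add]
  rw [Finset.sum_ite_eq' Finset.univ (k + q.1)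
    (fun x => if m = x + p.1 then ch d (cc d * p.1 * p.2 + p.2 * x) *
      ch d (cc d * q.1 * q.2 + q.2 * k) else 0)]
  simp only [Finset.mem_univ, if_true]
  have hcond : m = k + q.1 + p.1 ↔ m = k + (p.1 + q.1) := by constructor <;> (intro h; rw [h]; ring)
  split_ifs with h1 h2' h2'
  · rw [← AddChar.map_add_eq_mul, ← AddChar.map_add_eq_mul]
    congr 1
    linear_combination (-(p.2 * q.1)) * h2
  · exact absurd (hcond.mp h1) h2'
  · exact absurd (hcond.mpr h2') h1
  · rfl

lemma Dm_ct (hd : Odd d) (p : ZMod d × ZMod d) : (Dm d p)ᴴ = Dm d (-p) := by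
  have h2 := two_cc d hd
  ext m k
  rw [Matrix.conjTranspose_apply]
  simp only [Matrix.of_apply, Dm, Prod.fst_neg, Prod.snd_neg]
  have hcond : k = m + p.1 ↔ m = k + -p.1 := by constructor <;> (intro h; rw [h]; ring)
  split_ifs with h1 h2' h2'
  · rw [Complex.star_def, ch_conj]
    congr 1
    rw [h1]
    linear_combination (-(p.1 * p.2)) * h2
  · exact absurd (hcond.mp h1) h2'
  · exact absurd (hcond.mpr h2') h1
  · exact star_zero _

lemma trace_Dm (s : ZMod d × ZMod d) :
    (Dm d s).trace = if s = 0 then (d : ℂ) else 0 := by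
  rw [Matrix.trace]
  simp only [Matrix.diag_apply, Matrix.of_apply, Dm]
  by_cases h1 : s.1 = 0
  · simp only [h1, add_zero, if_true]
    have : ∀ k : ZMod d, cc d * 0 * s.2 + s.2 * k = s.2 * k := by
      intro k; ring
    simp_rw [this]
    rw [sum_ch]
    by_cases h : s.2 = 0
    · have hs : s = 0 := Prod.ext h1 h
      simp [h, hs]
    · have hs : ¬ s = 0 := fun hh => h (by simp [hh])
      simp [h, hs]
  · have : ∀ k : ZMod d, ¬ (k = k + s.1) := by
      intro k hk
      exact h1 (by linear_combination hk.symm)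
    simp only [this, if_false, Finset.sum_const_zero]
    have : ¬ s = 0 := fun h => h1 (by simp [h])
    simp [this]

lemma Dm_herm_mul (hd : Odd d) (p q : ZMod d × ZMod d) :
    (Dm d p)ᴴ * Dm d q = ch d (cc d * (p.1 * q.2 - q.1 * p.2)) • Dm d (q - p) := by
  rw [Dm_ct d hd, Dm_mul d hd]
  have h1 : (-p).2 * q.1 - (-p).1 * q.2 = p.1 * q.2 - q.1 * p.2 := by
    simp only [Prod.fst_neg, Prod.snd_neg]; ring
  have h2 : -p + q = q - p := by ring
  rw [h1, h2]

lemma trace_DmH_Dm (hd : Odd d) (p q : ZMod d × ZMod d) :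
    ((Dm d p)ᴴ * Dm d q).trace = if p = q then (d : ℂ) else 0 := by
  rw [Dm_herm_mul d hd, Matrix.trace_smul, trace_Dm, smul_eq_mul]
  by_cases h : p = q
  · subst h
    simp [AddChar.map_zero_eq_one]
  · have : ¬ (q - p = 0) := fun hh => h (by linear_combination -hh)
    simp [this, h]

lemma trace_DmH_mul (q : ZMod d × ZMod d) (T : Matrix (ZMod d) (ZMod d) ℂ) :
    ((Dm d q)ᴴ * T).trace
      = ∑ k : ZMod d, ch d (-(cc d * q.1 * q.2 + q.2 * k)) * T (k + q.1) k := by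
  rw [Matrix.trace]
  simp only [Matrix.diag_apply, Matrix.mul_apply, Matrix.conjTranspose_apply, Matrix.of_apply,
    Dm, apply_ite (star : ℂ → ℂ), star_zero, ite_mul, zero_mul]
  refine Finset.sum_congr rfl fun k _ => ?_
  rw [Finset.sum_ite_eq' Finset.univ (k + q.1)
    (fun m => star (ch d (cc d * q.1 * q.2 + q.2 * k)) * T m k)]
  simp only [Finset.mem_univ, if_true]
  rw [Complex.star_def, ch_conj]

lemma Dm_complete (T : Matrix (ZMod d) (ZMod d) ℂ) :
    ∑ q : ZMod d × ZMod d, ((1 / (d:ℂ)) * ((Dm d q)ᴴ * T).trace) • Dm d q = T := by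
  have hd0 : (d:ℂ) ≠ 0 := Nat.cast_ne_zero.mpr (NeZero.ne d)
  ext a b
  rw [Matrix.sum_apply]
  simp_rw [Matrix.smul_apply, trace_DmH_mul, smul_eq_mul]
  rw [Fintype.sum_prod_type]
  simp only [Dm, Matrix.of_apply, mul_ite, mul_zero]
  have hcond : ∀ q1 : ZMod d, (a = b + q1) = (q1 = a - b) :=
    fun q1 => propext ⟨fun h => by rw [h]; ring, fun h => by rw [h]; ring⟩
  simp_rw [hcond, Finset.sum_ite_irrel, Finset.sum_const_zero]
  rw [Finset.sum_ite_eq' Finset.univ (a - b)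
    (fun q1 => ∑ q2 : ZMod d, (1 / (d:ℂ) *
      ∑ k : ZMod d, ch d (-(cc d * q1 * q2 + q2 * k)) * T (k + q1) k) *
        ch d (cc d * q1 * q2 + q2 * b))]
  simp only [Finset.mem_univ, if_true]
  have key : ∀ q2 k : ZMod d,
      ch d (-(cc d * (a-b) * q2 + q2 * k)) * T (k + (a-b)) k *
        ch d (cc d * (a-b) * q2 + q2 * b)
      = ch d ((b - k) * q2) * T (k + (a-b)) k := by
    intro q2 k
    rw [mul_right_comm, ← AddChar.map_add_eq_mul]
    congr 2
    ring
  have h1 : ∀ q2 : ZMod d, (1 / (d:ℂ) *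
      ∑ k : ZMod d, ch d (-(cc d * (a-b) * q2 + q2 * k)) * T (k + (a-b)) k) *
        ch d (cc d * (a-b) * q2 + q2 * b)
      = 1 / (d:ℂ) * ∑ k : ZMod d, ch d ((b - k) * q2) * T (k + (a-b)) k := by
    intro q2
    rw [mul_assoc, Finset.sum_mul]
    congr 1
    exact Finset.sum_congr rfl fun k _ => key q2 k
  simp_rw [h1]
  rw [← Finset.mul_sum, Finset.sum_comm]
  have h2 : ∀ k : ZMod d, ∑ q2 : ZMod d, ch d ((b - k) * q2) * T (k + (a-b)) k
      = (if k = b then (d:ℂ) else 0) * T (k + (a-b)) k := by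
    intro k
    rw [← Finset.sum_mul, sum_ch]
    by_cases hk : k = b
    · simp [hk]
    · have : ¬ (b - k = 0) := fun h => hk (by linear_combination -h)
      simp [this, hk]
  simp_rw [h2]
  simp only [ite_mul, zero_mul]
  rw [Finset.sum_ite_eq' Finset.univ b (fun k => (d:ℂ) * T (k + (a-b)) k)]
  simp only [Finset.mem_univ, if_true]
  have h3 : b + (a - b) = a := by ring
  rw [h3]
  field_simp

lemma trace_mul_conj_nonneg (ρ : Matrix (ZMod d) (ZMod d) ℂ) (hρ : ρ.PosSemidef)
    (T : Matrix (ZMod d) (ZMod d) ℂ) : 0 ≤ (ρ * (Tᴴ * T)).trace := by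
  have hbase : ∀ B : Matrix (ZMod d) (ZMod d) ℂ, 0 ≤ (Bᴴ * B).trace := by
    intro B
    rw [Matrix.trace]
    refine Finset.sum_nonneg fun i _ => ?_
    rw [Matrix.diag_apply, Matrix.mul_apply]
    refine Finset.sum_nonneg fun k _ => ?_
    rw [Matrix.conjTranspose_apply]
    exact star_mul_self_nonneg _
  have h := (hρ.mul_mul_conjTranspose_same T).trace_nonneg
  rwa [Matrix.mul_assoc, Matrix.trace_mul_comm, Matrix.mul_assoc] at h

lemma quad_eq (ρ : Matrix (ZMod d) (ZMod d) ℂ) (x : ZMod d × ZMod d → ℂ) :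
    ∑ p : ZMod d × ZMod d, ∑ q : ZMod d × ZMod d,
        conj (x p) * (ρ * ((Dm d p)ᴴ * Dm d q)).trace * x q =
      (ρ * ((∑ r : ZMod d × ZMod d, x r • Dm d r)ᴴ *
        (∑ r : ZMod d × ZMod d, x r • Dm d r))).trace := by
  rw [Matrix.conjTranspose_sum]
  simp only [Matrix.conjTranspose_smul, Matrix.sum_mul, Matrix.mul_sum, Matrix.smul_mul,
    Matrix.mul_smul, Matrix.trace_sum, Matrix.trace_smul, smul_smul, smul_eq_mul,
    starRingEnd_apply]
  rw [Finset.sum_comm]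
  refine Finset.sum_congr rfl fun q _ => ?_
  rw [Finset.mul_sum]
  refine Finset.sum_congr rfl fun p _ => ?_
  ring

lemma sum_ch_pair (v : ZMod d × ZMod d) :
    ∑ s : ZMod d × ZMod d, ch d (v.1 * s.1 + v.2 * s.2) =
      if v = 0 then ((d : ℂ)) ^ 2 else 0 := by
  rw [Fintype.sum_prod_type]
  simp_rw [AddChar.map_add_eq_mul]
  rw [← Finset.sum_mul_sum]
  rw [sum_ch, sum_ch]
  by_cases h1 : v.1 = 0 <;> by_cases h2 : v.2 = 0 <;>
    simp [h1, h2, Prod.ext_iff, sq]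

end QB

open QB in
/-- **Quantum Bochner's theorem for the discrete Wigner function.**
For odd `d` and a Hermitian `ρ` with `Tr ρ = 1`, characteristic function
`φ_ρ(j,l) = Tr(ρ ω^{2⁻¹ jl} X^j Z^l)` and discrete Wigner function
`μ_ρ(q,p) = (1/d) ∑_{j,l} ω^{−(jq+lp)} φ_ρ(j,l)`: `ρ` is a density matrix with nonnegative
Wigner function iff both `M^Q_{(j,l),(j',l')} = φ_ρ(j'−j,l'−l) ω^{2⁻¹(jl'−j'l)}` and
`M^C_{(j,l),(j',l')} = φ_ρ(j'−j,l'−l)` are positive semidefinite. -/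
theorem densityMatrix_posWigner_iff (d : ℕ) [NeZero d] (hd : Odd d)
    (ρ : Matrix (ZMod d) (ZMod d) ℂ) (hρ : ρ.IsHermitian) (htr : ρ.trace = 1)
    (φ : ZMod d × ZMod d → ℂ)
    (hφ : ∀ p : ZMod d × ZMod d,
      φ p = (ρ * (omega d ^ ((((d + 1) / 2 : ℕ) : ZMod d) * p.1 * p.2).val •
        (shift d ^ (p.1).val * clock d ^ (p.2).val))).trace)
    (μ : ZMod d × ZMod d → ℂ)
    (hμ : ∀ qp : ZMod d × ZMod d,
      μ qp = (1 / (d : ℂ)) *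
        ∑ j : ZMod d, ∑ l : ZMod d,
          omega d ^ (-(j * qp.1 + l * qp.2)).val * φ (j, l)) :
    (ρ.PosSemidef ∧ ∀ qp : ZMod d × ZMod d, 0 ≤ μ qp) ↔
      ((Matrix.of fun p q : ZMod d × ZMod d =>
          φ (q - p) *
            omega d ^ ((((d + 1) / 2 : ℕ) : ZMod d) * (p.1 * q.2 - q.1 * p.2)).val).PosSemidef ∧
        (Matrix.of fun p q : ZMod d × ZMod d => φ (q - p)).PosSemidef) := by
  have hd0 : (d:ℂ) ≠ 0 := Nat.cast_ne_zero.mpr (NeZero.ne d)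
  have hdr0 : (0:ℝ) < d := by exact_mod_cast Nat.pos_of_ne_zero (NeZero.ne d)
  -- φ in terms of the displacement operators
  have hφD : ∀ s : ZMod d × ZMod d, φ s = (ρ * Dm d s).trace := by
    intro s
    rw [hφ s, show ((((d + 1) / 2 : ℕ) : ZMod d)) = cc d from rfl, ← Dm_eq]
  -- μ as a sum over the product group
  have hμ' : ∀ w : ZMod d × ZMod d, μ w = (1 / (d:ℂ)) *
      ∑ s : ZMod d × ZMod d, ch d (-(s.1 * w.1 + s.2 * w.2)) * φ s := by
    intro w
    rw [hμ w]
    congr 1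
    rw [Fintype.sum_prod_type]
    simp [ch_apply]
  -- conjugation symmetry of φ
  have hconj : ∀ s : ZMod d × ZMod d, conj (φ s) = φ (-s) := by
    intro s
    calc conj (φ s) = ((ρ * Dm d s)ᴴ).trace := by
          rw [hφD s, Matrix.trace_conjTranspose, starRingEnd_apply]
      _ = ((Dm d s)ᴴ * ρᴴ).trace := by rw [Matrix.conjTranspose_mul]
      _ = (ρ * (Dm d s)ᴴ).trace := by rw [hρ.eq, Matrix.trace_mul_comm]
      _ = φ (-s) := by rw [Dm_ct d hd, hφD]
  -- Fourier inversion
  have hinv : ∀ s : ZMod d × ZMod d, φ s = (1 / (d:ℂ)) *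
      ∑ w : ZMod d × ZMod d, ch d (s.1 * w.1 + s.2 * w.2) * μ w := by
    intro s
    have key : ∑ w : ZMod d × ZMod d, ch d (s.1*w.1 + s.2*w.2) * μ w = (d:ℂ) * φ s := by
      have h1 : ∀ w : ZMod d × ZMod d, ch d (s.1*w.1 + s.2*w.2) * μ w
          = (1/(d:ℂ)) * ∑ t : ZMod d × ZMod d,
              ch d ((s.1-t.1)*w.1 + (s.2-t.2)*w.2) * φ t := by
        intro w
        rw [hμ' w, mul_left_comm]
        congr 1
        rw [Finset.mul_sum]
        refine Finset.sum_congr rfl fun t _ => ?_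
        rw [← mul_assoc, ← AddChar.map_add_eq_mul]
        congr 2
        ring
      simp_rw [h1]
      rw [← Finset.mul_sum, Finset.sum_comm]
      have h2 : ∀ t : ZMod d × ZMod d,
          ∑ w : ZMod d × ZMod d, ch d ((s.1-t.1)*w.1 + (s.2-t.2)*w.2) * φ t
          = (if t = s then ((d:ℂ))^2 else 0) * φ t := by
        intro t
        rw [← Finset.sum_mul]
        have hsc := sum_ch_pair d (s - t)
        simp only [Prod.fst_sub, Prod.snd_sub] at hsc
        rw [hsc]
        by_cases h : t = s
        · have : s - t = 0 := by rw [h]; ring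
          simp [this, h]
        · have : ¬ (s - t = 0) := fun hh => h (by linear_combination -hh)
          simp [this, h]
      simp_rw [h2]
      simp only [ite_mul, zero_mul]
      rw [Finset.sum_ite_eq' Finset.univ s (fun t => ((d:ℂ))^2 * φ t)]
      simp only [Finset.mem_univ, if_true]
      field_simp
    rw [key]
    field_simp
  -- M^C PSD implies μ nonneg
  have hpos_of_MC : (Matrix.of fun p q : ZMod d × ZMod d => φ (q - p)).PosSemidef →
      ∀ w : ZMod d × ZMod d, 0 ≤ μ w := by
    intro hM v
    set x : ZMod d × ZMod d → ℂ := fun r => ch d (-(r.1*v.1 + r.2*v.2)) with hx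
    have hquad := hM.dotProduct_mulVec_nonneg x
    have hsφ : ∑ s : ZMod d × ZMod d, ch d (-(s.1*v.1 + s.2*v.2)) * φ s = (d:ℂ) * μ v := by
      rw [hμ' v]
      field_simp
    have hvalue : dotProduct (star x)
        ((Matrix.of fun p q : ZMod d × ZMod d => φ (q - p)) *ᵥ x)
        = (d:ℂ)^2 * ((d:ℂ) * μ v) := by
      simp only [dotProduct, Matrix.mulVec, Pi.star_apply, Matrix.of_apply]
      have hinner : ∀ p : ZMod d × ZMod d, ∑ q : ZMod d × ZMod d, φ (q - p) * x q
          = x p * ((d:ℂ) * μ v) := by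
        intro p
        rw [← hsφ, Finset.mul_sum]
        refine (Fintype.sum_equiv (Equiv.addLeft p) _ _ fun s => ?_).symm
        have h1 : (Equiv.addLeft p) s - p = s := by
          simp [Equiv.addLeft]
        rw [h1]
        have h2 : x ((Equiv.addLeft p) s) = x p * ch d (-(s.1*v.1 + s.2*v.2)) := by
          simp only [hx, Equiv.coe_addLeft, Prod.fst_add, Prod.snd_add]
          rw [← AddChar.map_add_eq_mul]
          congr 1
          ring
        rw [h2]
        ring
      simp_rw [hinner]
      have hsx : ∀ p : ZMod d × ZMod d, star (x p) * (x p * ((d:ℂ) * μ v)) = (d:ℂ) * μ v := by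
        intro p
        have : star (x p) * x p = 1 := by
          simp only [hx, Complex.star_def, ch_conj, neg_neg]
          rw [← AddChar.map_add_eq_mul, add_neg_cancel, AddChar.map_zero_eq_one]
        rw [← mul_assoc, this, one_mul]
      simp_rw [hsx]
      rw [Finset.sum_const, Finset.card_univ]
      simp only [Fintype.card_prod, ZMod.card, nsmul_eq_mul]
      push_cast
      ring
    rw [hvalue] at hquad
    have ha : ((d:ℂ)^2 * ((d:ℂ) * μ v)) = ((d:ℂ)^3) * μ v := by ring
    rw [ha] at hquad
    have hc : ((((d:ℝ)^3)⁻¹ : ℝ) : ℂ) * ((d:ℂ)^3 * μ v) = μ v := by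
      have hcast : ((((d:ℝ)^3)⁻¹ : ℝ) : ℂ) = ((d:ℂ)^3)⁻¹ := by push_cast; ring
      rw [hcast, ← mul_assoc, inv_mul_cancel₀ (pow_ne_zero 3 hd0), one_mul]
    rw [← hc]
    refine mul_nonneg ?_ hquad
    rw [Complex.zero_le_real]
    positivity
  -- μ nonneg implies M^C PSD
  have hMC_of_pos : (∀ w : ZMod d × ZMod d, 0 ≤ μ w) →
      (Matrix.of fun p q : ZMod d × ZMod d => φ (q - p)).PosSemidef := by
    intro hpos
    have hμre : ∀ w, μ w = (((μ w).re : ℝ) : ℂ) := by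
      intro w
      have him : (μ w).im = 0 := ((Complex.nonneg_iff.mp (hpos w)).2).symm
      exact ((Complex.conj_eq_iff_re).mp (Complex.conj_eq_iff_im.mpr him)).symm
    have hμre0 : ∀ w, 0 ≤ (μ w).re := fun w => (Complex.nonneg_iff.mp (hpos w)).1
    set B : Matrix (ZMod d × ZMod d) (ZMod d × ZMod d) ℂ :=
      Matrix.of fun w q => ((Real.sqrt ((μ w).re / d) : ℝ) : ℂ) *
        ch d (q.1 * w.1 + q.2 * w.2) with hB
    have hdecomp : (Matrix.of fun p q : ZMod d × ZMod d => φ (q - p)) = Bᴴ * B := by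
      ext p q
      rw [Matrix.of_apply, hinv (q - p), Finset.mul_sum, Matrix.mul_apply]
      refine Finset.sum_congr rfl fun w _ => ?_
      rw [Matrix.conjTranspose_apply, hB]
      simp only [Matrix.of_apply, star_mul', Complex.star_def, Complex.conj_ofReal, ch_conj]
      have hsq : ((Real.sqrt ((μ w).re / d) : ℝ) : ℂ) * ((Real.sqrt ((μ w).re / d) : ℝ) : ℂ)
          = (((μ w).re / d : ℝ) : ℂ) := by
        rw [← Complex.ofReal_mul, Real.mul_self_sqrt (div_nonneg (hμre0 w) hdr0.le)]
      have hch : ch d (-(p.1 * w.1 + p.2 * w.2)) * ch d (q.1 * w.1 + q.2 * w.2)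
          = ch d ((q - p).1 * w.1 + (q - p).2 * w.2) := by
        rw [← AddChar.map_add_eq_mul]
        congr 1
        simp only [Prod.fst_sub, Prod.snd_sub]
        ring
      calc 1 / (d:ℂ) * (ch d ((q-p).1*w.1 + (q-p).2*w.2) * μ w)
          = (((μ w).re / d : ℝ) : ℂ) * (ch d (-(p.1*w.1+p.2*w.2)) * ch d (q.1*w.1+q.2*w.2)) := by
            rw [hch, hμre w, Complex.ofReal_re]
            push_cast
            field_simp
        _ = _ := by rw [← hsq]; ring
    rw [hdecomp]
    exact Matrix.posSemidef_conjTranspose_mul_self B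
  -- M^Q entries as traces
  have hMQe : ∀ p q : ZMod d × ZMod d,
      φ (q - p) * omega d ^ ((((d + 1) / 2 : ℕ) : ZMod d) * (p.1 * q.2 - q.1 * p.2)).val
        = (ρ * ((Dm d p)ᴴ * Dm d q)).trace := by
    intro p q
    rw [Dm_herm_mul d hd, Matrix.mul_smul, Matrix.trace_smul, smul_eq_mul, hφD,
      show ((((d + 1) / 2 : ℕ) : ZMod d)) = cc d from rfl, ← ch_apply]
    ring
  -- quadratic form of M^Q
  have hquadMQ : ∀ x : ZMod d × ZMod d → ℂ,
      dotProduct (star x) ((Matrix.of fun p q : ZMod d × ZMod d =>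
          φ (q - p) * omega d ^ ((((d + 1) / 2 : ℕ) : ZMod d) * (p.1 * q.2 - q.1 * p.2)).val) *ᵥ x)
        = (ρ * ((∑ r : ZMod d × ZMod d, x r • Dm d r)ᴴ *
            (∑ r : ZMod d × ZMod d, x r • Dm d r))).trace := by
    intro x
    rw [← quad_eq]
    simp only [dotProduct, Matrix.mulVec, Pi.star_apply, Matrix.of_apply]
    refine Finset.sum_congr rfl fun p _ => ?_
    rw [Finset.mul_sum]
    refine Finset.sum_congr rfl fun q _ => ?_
    rw [hMQe p q, starRingEnd_apply]
    ring
  -- ρ PSD implies M^Q PSD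
  have hMQ_of_rho : ρ.PosSemidef → (Matrix.of fun p q : ZMod d × ZMod d =>
      φ (q - p) * omega d ^ ((((d + 1) / 2 : ℕ) : ZMod d) * (p.1 * q.2 - q.1 * p.2)).val).PosSemidef := by
    intro hps
    refine .of_dotProduct_mulVec_nonneg ?_ ?_
    · show _ = _
      ext p q
      rw [Matrix.conjTranspose_apply, Matrix.of_apply, Matrix.of_apply, hMQe q p, hMQe p q,
        ← Matrix.trace_conjTranspose, Matrix.conjTranspose_mul, Matrix.conjTranspose_mul,
        Matrix.conjTranspose_conjTranspose, hρ.eq, Matrix.trace_mul_comm]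
    · intro x
      rw [hquadMQ x]
      exact trace_mul_conj_nonneg d ρ hps _
  -- M^Q PSD implies ρ PSD
  have hrho_of_MQ : (Matrix.of fun p q : ZMod d × ZMod d =>
      φ (q - p) * omega d ^ ((((d + 1) / 2 : ℕ) : ZMod d) * (p.1 * q.2 - q.1 * p.2)).val).PosSemidef →
      ρ.PosSemidef := by
    intro hM
    refine .of_dotProduct_mulVec_nonneg hρ fun y => ?_
    set T : Matrix (ZMod d) (ZMod d) ℂ :=
      Matrix.of fun k j => (if k = (0 : ZMod d) then 1 else 0) * star (y j) with hT
    set x : ZMod d × ZMod d → ℂ := fun r => (1 / (d:ℂ)) * ((Dm d r)ᴴ * T).trace with hx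
    have hTx : ∑ r : ZMod d × ZMod d, x r • Dm d r = T := Dm_complete d T
    have h1 := hM.dotProduct_mulVec_nonneg x
    rw [hquadMQ x, hTx] at h1
    have h2 : (ρ * (Tᴴ * T)).trace = dotProduct (star y) (ρ *ᵥ y) := by
      have hTT : Tᴴ * T = Matrix.of fun i j => y i * star (y j) := by
        ext i j
        have hterm : ∀ k : ZMod d, star (T k i) * T k j
            = if k = 0 then y i * star (y j) else 0 := by
          intro k
          rw [hT]
          simp only [Matrix.of_apply, star_mul', star_star, apply_ite (star : ℂ → ℂ),
            star_one, star_zero]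
          by_cases hk : k = 0 <;> simp [hk]
        simp_rw [Matrix.mul_apply, Matrix.conjTranspose_apply, hterm]
        rw [Finset.sum_ite_eq' Finset.univ (0 : ZMod d) (fun _ => y i * star (y j))]
        simp
      rw [hTT]
      rw [Matrix.trace]
      simp only [Matrix.diag_apply, Matrix.mul_apply, Matrix.of_apply, dotProduct,
        Matrix.mulVec, Pi.star_apply]
      refine Finset.sum_congr rfl fun i _ => ?_
      rw [Finset.mul_sum]
      refine Finset.sum_congr rfl fun j _ => ?_
      ring
    rw [← h2]
    exact h1
  constructor
  · rintro ⟨h1, h2⟩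
    exact ⟨hMQ_of_rho h1, hMC_of_pos h2⟩
  · rintro ⟨h1, h2⟩
    exact ⟨hrho_of_MQ h1, hpos_of_MC h2⟩
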